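/- Let X be a real or complex Banach space which is quasi-reflexive of order 1. Then its dual space X*, with the dual norm, is also quasi-reflexive of order 1. -/

import Mathlib

set_option maxHeartbeats 1000000
set_option synthInstance.maxHeartbeats 400000

/-- A (semi)normed space `E` over `𝕜` is quasi-reflexive of order `1` if the canonical
embedding of `E` into its bidual has range of codimension `1`, i.e. the quotient of the
bidual by this range is one-dimensional. -/
def IsQuasiReflexiveOfOrderOne (𝕜 : Type*) (E : Type*) [NontriviallyNormedField 𝕜]
    [SeminormedAddCommGroup E] [NormedSpace 𝕜 E] : Prop :=
  Module.finrank 𝕜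
    (@HasQuotient.Quotient _ _ (@Submodule.hasQuotient 𝕜 _ _ ContinuousLinearMap.addCommGroup _)
      (LinearMap.range (NormedSpace.inclusionInDoubleDual 𝕜 E).toLinearMap)) = 1

open NormedSpace in
/-- **Fact 6.2 of the paper.** If a (real or complex) Banach space `X` is
quasi-reflexive of order `1`, then so is its dual `X*`. -/
theorem dual_of_quasireflexive_is_quasireflexive
    (𝕜 : Type*) [RCLike 𝕜] (X : Type*) [NormedAddCommGroup X] [NormedSpace 𝕜 X]
    [CompleteSpace X]
    (hX : IsQuasiReflexiveOfOrderOne 𝕜 X) :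
    IsQuasiReflexiveOfOrderOne 𝕜 (StrongDual 𝕜 X) := by
  classical
  unfold IsQuasiReflexiveOfOrderOne at hX ⊢
  letI : AddCommGroup (StrongDual 𝕜 (StrongDual 𝕜 X)) := ContinuousLinearMap.addCommGroup
  letI : AddCommGroup (StrongDual 𝕜 (StrongDual 𝕜 (StrongDual 𝕜 X))) := ContinuousLinearMap.addCommGroup
  set ι := inclusionInDoubleDual 𝕜 X with hιdef
  set J := inclusionInDoubleDual 𝕜 (StrongDual 𝕜 X) with hJdef
  set S : Submodule 𝕜 (StrongDual 𝕜 (StrongDual 𝕜 X)) := LinearMap.range ι.toLinearMap with hSdef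
  -- S is closed
  have hSclosed : IsClosed (S : Set (StrongDual 𝕜 (StrongDual 𝕜 X))) := by
    have h2 : Isometry ι := (inclusionInDoubleDualLi 𝕜 (E := X)).isometry
    exact h2.isClosedEmbedding.isClosed_range
  haveI : IsClosed (S : Set (StrongDual 𝕜 (StrongDual 𝕜 X))) := hSclosed
  haveI hT2 : T2Space (StrongDual 𝕜 (StrongDual 𝕜 X) ⧸ S) :=
    inferInstance
  haveI : FiniteDimensional 𝕜 (StrongDual 𝕜 (StrongDual 𝕜 X) ⧸ S) :=
    FiniteDimensional.of_finrank_pos (by rw [hX]; norm_num)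
  -- the projection π : X*** → X*
  let π : StrongDual 𝕜 (StrongDual 𝕜 (StrongDual 𝕜 X)) →ₗ[𝕜] StrongDual 𝕜 X :=
    { toFun := fun f => f.comp ι
      map_add' := fun f g => by ext x; rfl
      map_smul' := fun c f => by ext x; rfl }
  have hπJ : ∀ g : StrongDual 𝕜 X, π (J g) = g := by
    intro g; ext x
    show J g (ι x) = g x
    rw [hJdef, hιdef, dual_def, dual_def]
  have hcompl : IsCompl (LinearMap.range J.toLinearMap) (LinearMap.ker π) := by
    constructor
    · rw [disjoint_iff]
      refine (Submodule.eq_bot_iff _).2 fun f hf => ?_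
      obtain ⟨⟨g, rfl⟩, h0⟩ := Submodule.mem_inf.1 hf
      rw [LinearMap.mem_ker, ContinuousLinearMap.coe_coe, hπJ] at h0
      rw [h0, map_zero]
    · rw [codisjoint_iff, eq_top_iff]
      intro f _
      refine Submodule.mem_sup.2 ⟨J (π f), ⟨π f, rfl⟩, f - J (π f), ?_, by abel⟩
      rw [LinearMap.mem_ker, map_sub, hπJ, sub_self]
  have e1 : (StrongDual 𝕜 (StrongDual 𝕜 (StrongDual 𝕜 X)) ⧸ LinearMap.range J.toLinearMap) ≃ₗ[𝕜] LinearMap.ker π :=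
    Submodule.quotientEquivOfIsCompl _ _ hcompl
  -- ker π ≃ Dual of the quotient
  have hmem : ∀ f : StrongDual 𝕜 (StrongDual 𝕜 (StrongDual 𝕜 X)), f ∈ LinearMap.ker π →
      S ≤ LinearMap.ker (f : StrongDual 𝕜 (StrongDual 𝕜 X) →ₗ[𝕜] 𝕜) := by
    rintro f hf F ⟨x, rfl⟩
    have : π f = 0 := hf
    have := congrFun (congrArg DFunLike.coe this) x
    exact this
  let Φ : LinearMap.ker π →ₗ[𝕜] Module.Dual 𝕜 (StrongDual 𝕜 (StrongDual 𝕜 X) ⧸ S) :=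
    { toFun := fun f => S.liftQ (f.1 : StrongDual 𝕜 (StrongDual 𝕜 X) →ₗ[𝕜] 𝕜) (hmem f.1 f.2)
      map_add' := fun f g => by
        apply Submodule.linearMap_qext; ext F; rfl
      map_smul' := fun c f => by
        apply Submodule.linearMap_qext; ext F; rfl }
  have hΦinj : Function.Injective Φ := by
    intro f g hfg
    ext F
    have := congrFun (congrArg DFunLike.coe hfg) (Submodule.Quotient.mk F)
    simpa [Φ] using this
  have hΦsurj : Function.Surjective Φ := by
    intro g
    have hgc : Continuous g := g.continuous_of_finiteDimensional
    have hmkc : Continuous S.mkQ := continuous_quot_mk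
    refine ⟨⟨⟨g.comp S.mkQ, hgc.comp hmkc⟩, ?_⟩, ?_⟩
    · ext x
      show g (Submodule.Quotient.mk (ι x)) = 0
      rw [(Submodule.Quotient.mk_eq_zero S (x := ι x)).2 ⟨x, rfl⟩, map_zero]
    · apply Submodule.linearMap_qext; ext F; rfl
  have e2 : (LinearMap.ker π) ≃ₗ[𝕜] Module.Dual 𝕜 (StrongDual 𝕜 (StrongDual 𝕜 X) ⧸ S) :=
    LinearEquiv.ofBijective Φ ⟨hΦinj, hΦsurj⟩
  rw [e1.finrank_eq, e2.finrank_eq, Subspace.dual_finrank_eq, hX]
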